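/- Let K ⊂ ℂ be a field and let L = θⁿ + Σ aᵢθⁱ with aᵢ ∈ K[[t]], aᵢ(0) = 0, be formally self-adjoint in the sense that the pairing on M_L determined by ⟨η, η⁽ⁱ⁾⟩ = 0 for i < n−1 and ⟨η, η⁽ⁿ⁻¹⁾⟩ = β⁻¹ is horizontal, where β ∈ 1 + tK[[t]] solves n·θβ = 2a_{n−1}β. Then this pairing satisfies ⟨x, y⟩ = (−1)^{n+1}⟨y, x⟩ for all x, y in M_L; i.e., the pairing is symmetric if n is odd and alternating if n is even. -/

import Mathlib

open PowerSeries

/-- The logarithmic derivative `θ = t·d/dt` on formal power series. -/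
noncomputable def theta {K : Type*} [CommRing K] (f : K⟦X⟧) : K⟦X⟧ :=
  PowerSeries.X * PowerSeries.derivative K f

lemma theta_sub {K : Type*} [CommRing K] (f g : K⟦X⟧) :
    theta (f - g) = theta f - theta g := by
  simp [theta, map_sub, mul_sub]

lemma theta_zero {K : Type*} [CommRing K] : theta (0 : K⟦X⟧) = 0 := by
  simp [theta]

lemma theta_neg_one_pow_mul {K : Type*} [CommRing K] (m : ℕ) (f : K⟦X⟧) :
    theta ((-1) ^ m * f) = (-1) ^ m * theta f := by
  rcases Nat.even_or_odd m with h | h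
  · rw [h.neg_one_pow]; simp
  · rw [h.neg_one_pow]; simp [theta]

/-- Parity of the polarization: the horizontal pairing on `M_L` determined by
`⟨η, η⁽ⁱ⁾⟩ = 0` for `i < n−1` and `⟨η, η⁽ⁿ⁻¹⁾⟩ = β⁻¹` is `(−1)^{n+1}`-symmetric. -/
theorem pairing_parity {K : Type*} [Field K] [CharZero K] {n : ℕ} (hn : 0 < n)
    (a : Fin n → K⟦X⟧) (ha : ∀ i, constantCoeff (a i) = 0)
    (β : K⟦X⟧) (hβ1 : constantCoeff β = 1)
    (hβ : (n : K⟦X⟧) * theta β = 2 * a ⟨n - 1, Nat.sub_lt hn one_pos⟩ * β)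
    {M : Type*} [AddCommGroup M] [Module K⟦X⟧ M]
    (b : Module.Basis (Fin n) K⟦X⟧ M) (D : M →+ M)
    (hD : ∀ (f : K⟦X⟧) (x : M), D (f • x) = theta f • x + f • D x)
    (hDb : ∀ (i : ℕ) (h : i + 1 < n), D (b ⟨i, Nat.lt_of_succ_lt h⟩) = b ⟨i + 1, h⟩)
    (hDlast : D (b ⟨n - 1, Nat.sub_lt hn one_pos⟩) = -∑ i : Fin n, a i • b i)
    (B : M →ₗ[K⟦X⟧] M →ₗ[K⟦X⟧] K⟦X⟧)
    (hhor : ∀ x y : M, theta (B x y) = B (D x) y + B x (D y))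
    (hvan : ∀ i : Fin n, (i : ℕ) < n - 1 → B (b ⟨0, hn⟩) (b i) = 0)
    (hlast : B (b ⟨0, hn⟩) (b ⟨n - 1, Nat.sub_lt hn one_pos⟩) = β⁻¹) :
    ∀ x y : M, B x y = (-1) ^ (n + 1) * B y x := by
  -- Step 1: antidiagonal values
  have key : ∀ i j : ℕ, (hij : i + j < n) →
      B (b ⟨i, lt_of_le_of_lt (Nat.le_add_right i j) hij⟩)
        (b ⟨j, lt_of_le_of_lt (Nat.le_add_left j i) hij⟩)
        = if i + j = n - 1 then (-1) ^ i * β⁻¹ else 0 := by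
    intro i
    induction i with
    | zero =>
      intro j hij
      by_cases hj : j = n - 1
      · subst hj
        rw [if_pos (by omega)]
        simpa using hlast
      · rw [if_neg (by omega)]
        exact hvan ⟨j, by omega⟩ (show j < n - 1 by omega)
    | succ i ih =>
      intro j hij
      have e0 := ih j (by omega)
      have e1 := ih (j + 1) (by omega)
      have hor := hhor (b ⟨i, by omega⟩) (b ⟨j, by omega⟩)
      rw [hDb i (by omega), hDb j (by omega)] at hor
      have hB : B (b ⟨i + 1, by omega⟩) (b ⟨j, by omega⟩)
          = theta (B (b ⟨i, by omega⟩) (b ⟨j, by omega⟩))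
            - B (b ⟨i, by omega⟩) (b ⟨j + 1, by omega⟩) := by
        rw [hor]; ring
      rw [hB, e0, e1]
      by_cases h : i + 1 + j = n - 1
      · rw [if_pos h, if_neg (by omega), if_pos (by omega), theta_zero, pow_succ]
        ring
      · rw [if_neg h, if_neg (by omega), if_neg (by omega), theta_zero]
        ring
  -- The comparison pairing
  set C : M →ₗ[K⟦X⟧] M →ₗ[K⟦X⟧] K⟦X⟧ :=
    B - B.flip.compr₂ (LinearMap.mulLeft K⟦X⟧ ((-1 : K⟦X⟧) ^ (n + 1))) with hC
  have Capp : ∀ x y : M, C x y = B x y - (-1) ^ (n + 1) * B y x := by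
    intro x y
    simp [hC, LinearMap.sub_apply, LinearMap.compr₂_apply, LinearMap.mulLeft_apply,
      LinearMap.flip_apply]
  have Chor : ∀ x y : M, theta (C x y) = C (D x) y + C x (D y) := by
    intro x y
    rw [Capp, Capp, Capp, theta_sub, theta_neg_one_pow_mul, hhor x y, hhor y x]
    ring
  -- C vanishes on the first basis vector
  have Crow0 : C (b ⟨0, hn⟩) = 0 := by
    apply b.ext
    intro j
    rw [LinearMap.zero_apply, Capp]
    have hj0 := key (j : ℕ) 0 (by omega)
    by_cases hj : (j : ℕ) = n - 1
    · have hb : b j = b ⟨n - 1, Nat.sub_lt hn one_pos⟩ := by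
        congr 1
        exact Fin.ext hj
      rw [hb, hlast]
      have hb0 : B (b ⟨n - 1, Nat.sub_lt hn one_pos⟩) (b ⟨0, hn⟩) = (-1) ^ (n - 1) * β⁻¹ := by
        have := key (n - 1) 0 (by omega)
        rw [if_pos (by omega)] at this
        convert this using 3 <;> omega
      rw [hb0]
      have hpow : ((-1 : K⟦X⟧)) ^ (n + 1) * ((-1) ^ (n - 1)) = 1 := by
        rw [← pow_add]
        exact Even.neg_one_pow ⟨n, by omega⟩
      calc β⁻¹ - (-1 : K⟦X⟧) ^ (n + 1) * ((-1) ^ (n - 1) * β⁻¹)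
          = β⁻¹ - ((-1 : K⟦X⟧) ^ (n + 1) * (-1) ^ (n - 1)) * β⁻¹ := by ring
        _ = 0 := by rw [hpow]; ring
    · have h1 : B (b ⟨0, hn⟩) (b j) = 0 := hvan j (by omega)
      have h2 : B (b j) (b ⟨0, hn⟩) = 0 := by
        have := key (j : ℕ) 0 (by omega)
        rw [if_neg (by omega)] at this
        exact this
      rw [h1, h2]
      ring
  -- C vanishes on all basis vectors
  have Crow : ∀ i : ℕ, (hi : i < n) → C (b ⟨i, hi⟩) = 0 := by
    intro i
    induction i with
    | zero => intro hi; exact Crow0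
    | succ i ih =>
      intro hi
      apply b.ext
      intro j
      rw [LinearMap.zero_apply]
      have hor := Chor (b ⟨i, by omega⟩) (b j)
      rw [hDb i hi] at hor
      have h0 : C (b ⟨i, by omega⟩) = 0 := ih (by omega)
      rw [h0] at hor
      simpa [theta_zero] using hor.symm
  have hCzero : C = 0 := by
    apply b.ext
    intro i
    have := Crow (i : ℕ) i.2
    rwa [Fin.eta] at this
  intro x y
  have : C x y = 0 := by rw [hCzero]; rfl
  rw [Capp] at this
  exact (sub_eq_zero.mp this)
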